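/- Fix a symmetric matrix A ∈ ℝ^{n×n}, a scalar ρ ∈ ℝ, and a vector b ∈ ℝ^n. Let (λ₁, u₁) be the leading eigenpair of A (the eigenvalue of largest absolute value with a unit eigenvector u₁), and let Δ > 0 be the gap between the largest and the second largest singular value of A. Let ũ₁ be a unit leading eigenvector of A + ρ·bbᵀ. If |ρ|·‖b‖² ≤ Δ/4, then there is a sign s ∈ {±1} such that ‖u₁ − s·ũ₁‖ ≤ 2√2·|ρ|·‖b‖·|bᵀu₁|/Δ. -/

import Mathlib

open Matrix

/-- Euclidean norm of a vector in `ℝ^k`. -/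
noncomputable def eucNorm {k : ℕ} (v : Fin k → ℝ) : ℝ := Real.sqrt (∑ i, (v i) ^ 2)

/-- `u` is a unit leading eigenvector of the (symmetric) matrix `M`: a unit eigenvector
whose eigenvalue has the largest absolute value among all eigenvalues of `M`. -/
def IsLeadingEigen {n : ℕ} (M : Matrix (Fin n) (Fin n) ℝ) (u : Fin n → ℝ) : Prop :=
  eucNorm u = 1 ∧ ∃ μ : ℝ, M.mulVec u = μ • u ∧
    ∀ μ' : ℝ, (∃ w : Fin n → ℝ, w ≠ 0 ∧ M.mulVec w = μ' • w) → |μ'| ≤ |μ|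

def toE {k : ℕ} (x : Fin k → ℝ) : EuclideanSpace ℝ (Fin k) := WithLp.toLp 2 x

lemma euc_inner_eq {k : ℕ} (x y : EuclideanSpace ℝ (Fin k)) :
    (inner ℝ x y : ℝ) = ∑ i, x i * y i := by
  simp [PiLp.inner_apply, RCLike.inner_apply, mul_comm]

lemma eucNorm_sq {k : ℕ} (x : Fin k → ℝ) : eucNorm x ^ 2 = ∑ i, x i ^ 2 := by
  rw [eucNorm, Real.sq_sqrt]; positivity

lemma repr_mulVec {n : ℕ} (M : Matrix (Fin n) (Fin n) ℝ) (hM : M.IsHermitian)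
    (x : Fin n → ℝ) (i : Fin n) :
    hM.eigenvectorBasis.repr (toE (M.mulVec x)) i
      = hM.eigenvalues i * hM.eigenvectorBasis.repr (toE x) i := by
  have hMt : Mᵀ = M := by
    rw [← Matrix.conjTranspose_eq_transpose_of_trivial]; exact hM.eq
  have key : M *ᵥ (fun j => hM.eigenvectorBasis i j)
      = hM.eigenvalues i • fun j => hM.eigenvectorBasis i j :=
    hM.mulVec_eigenvectorBasis i
  rw [OrthonormalBasis.repr_apply_apply, OrthonormalBasis.repr_apply_apply,
    euc_inner_eq, euc_inner_eq]
  have h2 : ∑ j, hM.eigenvectorBasis i j * toE (M.mulVec x) j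
      = dotProduct (M *ᵥ fun j => hM.eigenvectorBasis i j) x := by
    show dotProduct (fun j => hM.eigenvectorBasis i j) (M *ᵥ x) = _
    rw [dotProduct_mulVec, ← mulVec_transpose, hMt]
  rw [h2, key, smul_dotProduct]
  rfl

lemma parseval {n : ℕ} (M : Matrix (Fin n) (Fin n) ℝ) (hM : M.IsHermitian)
    (x y : Fin n → ℝ) :
    ∑ i, hM.eigenvectorBasis.repr (toE x) i * hM.eigenvectorBasis.repr (toE y) i
      = ∑ i, x i * y i := by
  have h := hM.eigenvectorBasis.repr.inner_map_map (toE x) (toE y)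
  rw [euc_inner_eq] at h
  rw [euc_inner_eq] at h
  exact h

lemma eigen_abs_le {n : ℕ} (M : Matrix (Fin n) (Fin n) ℝ) (hM : M.IsHermitian) (μ : ℝ)
    (hμ : ∀ μ' : ℝ, (∃ w : Fin n → ℝ, w ≠ 0 ∧ M.mulVec w = μ' • w) → |μ'| ≤ |μ|)
    (i : Fin n) : |hM.eigenvalues i| ≤ |μ| := by
  refine hμ _ ⟨fun j => hM.eigenvectorBasis i j, ?_, hM.mulVec_eigenvectorBasis i⟩
  intro h
  exact hM.eigenvectorBasis.orthonormal.ne_zero i (by ext j; exact congrFun h j)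

lemma rayleigh_abs_le {n : ℕ} (M : Matrix (Fin n) (Fin n) ℝ) (hM : M.IsHermitian) (μ : ℝ)
    (hμ : ∀ μ' : ℝ, (∃ w : Fin n → ℝ, w ≠ 0 ∧ M.mulVec w = μ' • w) → |μ'| ≤ |μ|)
    (x : Fin n → ℝ) (hx : ∑ i, x i ^ 2 = 1) :
    |∑ i, x i * M.mulVec x i| ≤ |μ| := by
  have hpar := parseval M hM x (M.mulVec x)
  have hxx := parseval M hM x x
  have h1 : ∑ i, x i * M.mulVec x i
      = ∑ i, hM.eigenvalues i * (hM.eigenvectorBasis.repr (toE x) i) ^ 2 := by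
    rw [← hpar]
    refine Finset.sum_congr rfl fun i _ => ?_
    rw [repr_mulVec]; ring
  have h2 : ∑ i, (hM.eigenvectorBasis.repr (toE x) i) ^ 2 = 1 := by
    simp only [sq]
    rw [hxx]
    simpa [sq] using hx
  calc |∑ i, x i * M.mulVec x i|
      ≤ ∑ i, |hM.eigenvalues i * (hM.eigenvectorBasis.repr (toE x) i) ^ 2| := by
        rw [h1]; exact Finset.abs_sum_le_sum_abs _ _
    _ ≤ ∑ i, |μ| * (hM.eigenvectorBasis.repr (toE x) i) ^ 2 := by
        refine Finset.sum_le_sum fun i _ => ?_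
        rw [abs_mul, abs_of_nonneg (sq_nonneg (hM.eigenvectorBasis.repr (toE x) i))]
        exact mul_le_mul_of_nonneg_right (eigen_abs_le M hM μ hμ i) (sq_nonneg _)
    _ = |μ| := by rw [← Finset.mul_sum, h2, mul_one]

lemma vecMulVec_mulVec' {n : ℕ} (b x : Fin n → ℝ) :
    Matrix.vecMulVec b b *ᵥ x = (∑ i, b i * x i) • b := by
  ext j
  simp [mulVec, dotProduct, vecMulVec_apply, Finset.mul_sum, mul_comm, mul_left_comm]

lemma vecMulVec_herm {n : ℕ} (b : Fin n → ℝ) (ρ : ℝ) :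
    (ρ • Matrix.vecMulVec b b)ᴴ = ρ • Matrix.vecMulVec b b := by
  ext i j
  simp [conjTranspose_apply, vecMulVec_apply, Matrix.smul_apply, mul_comm]

set_option maxHeartbeats 1000000 in
/-- eigenvector perturbation under a rank-one update: let `A` be symmetric
with leading eigenpair `(λ₁, u₁)` (so `|λ₁|` is maximal among all eigenvalues), and let
`Δ = |λ_{i₀}| - max_{i ≠ i₀} |λ_i| > 0` be the gap between the largest and second largest
singular values of `A` (listing the eigenvalues of `A` with multiplicity as
`hA.eigenvalues`, with `i₀` an index attaining the maximum of `|λ_i|`). If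
`|ρ| ‖b‖² ≤ Δ/4` and `ũ₁` is a unit leading eigenvector of `A + ρ b bᵀ`, then up to a sign
`s ∈ {±1}`, `‖u₁ - s ũ₁‖ ≤ 2√2 |ρ| ‖b‖ |bᵀu₁| / Δ`. -/
theorem stmt_15 {n : ℕ} (A : Matrix (Fin n) (Fin n) ℝ) (hA : A.IsHermitian)
    (ρ : ℝ) (b : Fin n → ℝ) (lam : ℝ) (u₁ : Fin n → ℝ)
    (hu₁ : eucNorm u₁ = 1) (heig : A.mulVec u₁ = lam • u₁)
    (hlead : ∀ μ' : ℝ, (∃ w : Fin n → ℝ, w ≠ 0 ∧ A.mulVec w = μ' • w) → |μ'| ≤ |lam|)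
    (i₀ : Fin n) (hi₀ : ∀ i, |hA.eigenvalues i| ≤ |hA.eigenvalues i₀|)
    (Δ : ℝ)
    (hΔ : Δ = |hA.eigenvalues i₀| - ⨆ i : {i : Fin n // i ≠ i₀}, |hA.eigenvalues i.1|)
    (hΔpos : 0 < Δ)
    (hsmall : |ρ| * eucNorm b ^ 2 ≤ Δ / 4)
    (ut : Fin n → ℝ) (hut : IsLeadingEigen (A + ρ • Matrix.vecMulVec b b) ut) :
    ∃ s : ℝ, (s = 1 ∨ s = -1) ∧
      eucNorm (u₁ - s • ut)
        ≤ 2 * Real.sqrt 2 * (|ρ| * eucNorm b * |∑ i, b i * u₁ i|) / Δ := by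
  obtain ⟨hutn, μt, heigt, hleadt⟩ := hut
  set L : Fin n → ℝ := hA.eigenvalues with hL
  set B := hA.eigenvectorBasis with hB
  set c : Fin n → ℝ := fun i => B.repr (toE u₁) i with hc
  set d : Fin n → ℝ := fun i => B.repr (toE ut) i with hd
  set g : Fin n → ℝ := fun i => B.repr (toE b) i with hg
  set nb : ℝ := eucNorm b with hnb
  set γ : ℝ := ∑ i, b i * u₁ i with hγ
  set β : ℝ := ∑ i, b i * ut i with hβ
  have hnb0 : 0 ≤ nb := Real.sqrt_nonneg _
  -- basic sums
  have hu₁2 : ∑ i, u₁ i ^ 2 = 1 := by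
    rw [← eucNorm_sq, hu₁]; norm_num
  have hut2 : ∑ i, ut i ^ 2 = 1 := by
    rw [← eucNorm_sq, hutn]; norm_num
  have hb2 : ∑ i, b i ^ 2 = nb ^ 2 := (eucNorm_sq b).symm
  have hc2 : ∑ i, c i ^ 2 = 1 := by
    have := parseval A hA u₁ u₁
    simp only [← hB, ← hc] at this
    simp only [sq]; rw [this]; simpa [sq] using hu₁2
  have hd2 : ∑ i, d i ^ 2 = 1 := by
    have := parseval A hA ut ut
    simp only [sq]; rw [this]; simpa [sq] using hut2
  have hg2 : ∑ i, g i ^ 2 = nb ^ 2 := by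
    have := parseval A hA b b
    simp only [sq]; rw [this]; simpa [sq] using hb2
  -- eigen equations in coordinates
  have hceig : ∀ i, L i * c i = lam * c i := by
    intro i
    have h : B.repr (toE (A *ᵥ u₁)) i = B.repr (toE (lam • u₁)) i := by rw [heig]
    rw [repr_mulVec A hA u₁ i] at h
    have h2 : toE (lam • u₁) = lam • toE u₁ := rfl
    rw [h2, _root_.map_smul] at h
    exact h
  have hbb : Matrix.vecMulVec b b *ᵥ ut = β • b := vecMulVec_mulVec' b ut
  have hAut : A *ᵥ ut = μt • ut - (ρ * β) • b := by
    rw [add_mulVec, smul_mulVec, hbb] at heigt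
    rw [← heigt, smul_smul]
    abel
  have hdeig : ∀ i, L i * d i = μt * d i - (ρ * β) * g i := by
    intro i
    have h : B.repr (toE (A *ᵥ ut)) i
        = B.repr (toE (μt • ut - (ρ * β) • b)) i := by rw [hAut]
    rw [repr_mulVec A hA ut i] at h
    have h2 : toE (μt • ut - (ρ * β) • b) = μt • toE ut - (ρ * β) • toE b := rfl
    rw [h2, map_sub, _root_.map_smul, _root_.map_smul] at h
    exact h
  -- lam is an eigenvalue in the list; identify index i₀
  have habs : ∀ i, |L i| ≤ |lam| := eigen_abs_le A hA lam hlead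
  have hgap : ∀ i, i ≠ i₀ → |L i| ≤ |L i₀| - Δ := by
    intro i hi
    have hle : |L i| ≤ ⨆ j : {j : Fin n // j ≠ i₀}, |L j.1| :=
      le_ciSup (f := fun j : {j : Fin n // j ≠ i₀} => |L j.1|)
        (Set.Finite.bddAbove (Set.finite_range _)) ⟨i, hi⟩
    rw [hΔ] at *
    linarith
  have hex : ∃ i, c i ≠ 0 := by
    by_contra h
    push_neg at h
    have : ∑ i, c i ^ 2 = 0 := by simp [h]
    rw [hc2] at this; norm_num at this
  obtain ⟨j, hj⟩ := hex
  have hlamj : lam = L j := by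
    have := hceig j
    have h2 : (L j - lam) * c j = 0 := by linarith
    rcases mul_eq_zero.1 h2 with h3 | h3
    · linarith
    · exact absurd h3 hj
  have hlam_le : |lam| ≤ |L i₀| := hlamj ▸ hi₀ j
  have hlam_eq : |lam| = |L i₀| := le_antisymm hlam_le (habs i₀)
  have hczero : ∀ i, i ≠ i₀ → c i = 0 := by
    intro i hi
    by_contra hci
    have := hceig i
    have h2 : (L i - lam) * c i = 0 := by linarith
    rcases mul_eq_zero.1 h2 with h3 | h3
    · have h4 : L i = lam := by linarith
      have h5 := hgap i hi
      rw [h4, hlam_eq] at h5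
      linarith
    · exact hci h3
  have hci₀ : c i₀ ^ 2 = 1 := by
    rw [← hc2]
    symm
    apply Finset.sum_eq_single i₀
    · intro j _ hj; rw [hczero j hj]; ring
    · intro h; exact absurd (Finset.mem_univ i₀) h
  -- Rayleigh lower bound for |μt|
  have hAt : (A + ρ • Matrix.vecMulVec b b).IsHermitian := by
    show _ᴴ = _
    rw [conjTranspose_add, vecMulVec_herm, hA.eq]
  have hray := rayleigh_abs_le _ hAt μt hleadt u₁ hu₁2
  have hquad : ∑ i, u₁ i * (A + ρ • Matrix.vecMulVec b b).mulVec u₁ i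
      = lam + ρ * γ ^ 2 := by
    have h1 : (A + ρ • Matrix.vecMulVec b b) *ᵥ u₁ = lam • u₁ + (ρ * γ) • b := by
      rw [add_mulVec, smul_mulVec, vecMulVec_mulVec' b u₁, heig, smul_smul, ← hγ]
    rw [h1]
    have h2 : ∀ i, u₁ i * (lam • u₁ + (ρ * γ) • b) i
        = lam * u₁ i ^ 2 + (ρ * γ) * (b i * u₁ i) := by
      intro i
      simp only [Pi.add_apply, Pi.smul_apply, smul_eq_mul]
      ring
    calc ∑ i, u₁ i * (lam • u₁ + (ρ * γ) • b) i
        = ∑ i, (lam * u₁ i ^ 2 + (ρ * γ) * (b i * u₁ i)) :=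
          Finset.sum_congr rfl fun i _ => h2 i
      _ = lam * ∑ i, u₁ i ^ 2 + (ρ * γ) * ∑ i, b i * u₁ i := by
          rw [Finset.sum_add_distrib, ← Finset.mul_sum, ← Finset.mul_sum]
      _ = lam + ρ * γ ^ 2 := by rw [hu₁2, ← hγ]; ring
  have hγ2 : γ ^ 2 ≤ nb ^ 2 := by
    calc γ ^ 2 ≤ (∑ i, b i ^ 2) * ∑ i, u₁ i ^ 2 :=
          Finset.sum_mul_sq_le_sq_mul_sq Finset.univ b u₁
      _ = nb ^ 2 := by rw [hb2, hu₁2, mul_one]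
  have hmu : |lam| - Δ / 4 ≤ |μt| := by
    rw [hquad] at hray
    have h1 : |lam| - |ρ * γ ^ 2| ≤ |lam + ρ * γ ^ 2| := by
      have := abs_add_le (lam + ρ * γ ^ 2) (-(ρ * γ ^ 2))
      simp only [add_neg_cancel_right, abs_neg] at this
      linarith
    have h2 : |ρ * γ ^ 2| ≤ |ρ| * nb ^ 2 := by
      rw [abs_mul, abs_of_nonneg (sq_nonneg γ)]
      exact mul_le_mul_of_nonneg_left hγ2 (abs_nonneg ρ)
    linarith
  have hsep : ∀ i, i ≠ i₀ → 3 * Δ / 4 ≤ |μt - L i| := by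
    intro i hi
    have h1 := hgap i hi
    have h2 : |μt| - |L i| ≤ |μt - L i| := abs_sub_abs_le_abs_sub μt (L i)
    rw [← hlam_eq] at h1
    linarith
  set S := Finset.univ.erase i₀ with hS
  set W2 : ℝ := ∑ i ∈ S, d i ^ 2 with hW2def
  have hW2nonneg : 0 ≤ W2 := Finset.sum_nonneg fun i _ => sq_nonneg _
  set W : ℝ := Real.sqrt W2 with hWdef
  have hWsq : W ^ 2 = W2 := Real.sq_sqrt hW2nonneg
  have hW0 : 0 ≤ W := Real.sqrt_nonneg _
  have hgS : ∑ i ∈ S, g i ^ 2 ≤ nb ^ 2 := by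
    rw [← hg2]
    exact Finset.sum_le_sum_of_subset_of_nonneg (Finset.erase_subset _ _)
      fun i _ _ => sq_nonneg _
  have hkey2 : (3 * Δ / 4) ^ 2 * W2 ≤ (ρ * β) ^ 2 * nb ^ 2 := by
    calc (3 * Δ / 4) ^ 2 * W2 = ∑ i ∈ S, (3 * Δ / 4) ^ 2 * d i ^ 2 := by
          rw [← Finset.mul_sum]
      _ ≤ ∑ i ∈ S, ((μt - L i) * d i) ^ 2 := by
          refine Finset.sum_le_sum fun i hi => ?_
          rw [mul_pow]
          refine mul_le_mul_of_nonneg_right ?_ (sq_nonneg _)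
          have h1 := hsep i (Finset.ne_of_mem_erase hi)
          calc (3 * Δ / 4) ^ 2 ≤ |μt - L i| ^ 2 :=
                pow_le_pow_left₀ (by linarith) h1 2
            _ = (μt - L i) ^ 2 := sq_abs _
      _ = ∑ i ∈ S, (ρ * β) ^ 2 * g i ^ 2 := by
          refine Finset.sum_congr rfl fun i _ => ?_
          have h := hdeig i
          have h1 : (μt - L i) * d i = (ρ * β) * g i := by ring_nf; ring_nf at h; linarith
          rw [h1, mul_pow]
      _ = (ρ * β) ^ 2 * ∑ i ∈ S, g i ^ 2 := (Finset.mul_sum _ _ _).symm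
      _ ≤ (ρ * β) ^ 2 * nb ^ 2 := mul_le_mul_of_nonneg_left hgS (sq_nonneg _)
  have hkey : (3 * Δ / 4) * W ≤ |ρ| * |β| * nb := by
    have hsq : ((3 * Δ / 4) * W) ^ 2 ≤ (|ρ| * |β| * nb) ^ 2 := by
      calc ((3 * Δ / 4) * W) ^ 2 = (3 * Δ / 4) ^ 2 * W2 := by rw [mul_pow, hWsq]
        _ ≤ (ρ * β) ^ 2 * nb ^ 2 := hkey2
        _ = (|ρ| * |β| * nb) ^ 2 := by simp [mul_pow, sq_abs]
    have h1 : 0 ≤ (3 * Δ / 4) * W := mul_nonneg (by linarith) hW0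
    have h2 : 0 ≤ |ρ| * |β| * nb := by positivity
    have h3 := Real.sqrt_le_sqrt hsq
    rwa [Real.sqrt_sq h1, Real.sqrt_sq h2] at h3
  have hgi₀ : g i₀ * c i₀ = γ := by
    have hip_bu := parseval A hA b u₁
    rw [← hγ] at hip_bu
    rw [← hip_bu]
    symm
    apply Finset.sum_eq_single i₀
    · intro j _ hj
      show g j * c j = 0
      rw [hczero j hj]; ring
    · intro h; exact absurd (Finset.mem_univ i₀) h
  have hdi₀ : d i₀ ^ 2 ≤ 1 := by
    rw [← hd2]
    exact Finset.single_le_sum (fun i _ => sq_nonneg (d i)) (Finset.mem_univ i₀)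
  have hci₀abs : |c i₀| = 1 := by
    have : |c i₀| = Real.sqrt ((c i₀) ^ 2) := (Real.sqrt_sq_eq_abs _).symm
    rw [this, hci₀, Real.sqrt_one]
  have hdi₀abs : |d i₀| ≤ 1 := by
    calc |d i₀| = Real.sqrt ((d i₀) ^ 2) := (Real.sqrt_sq_eq_abs _).symm
      _ ≤ Real.sqrt 1 := Real.sqrt_le_sqrt hdi₀
      _ = 1 := Real.sqrt_one
  have hgiabs : |g i₀| = |γ| := by
    rw [← hgi₀, abs_mul, hci₀abs, mul_one]
  have hβbound : |β| ≤ |γ| + nb * W := by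
    have h1 : β = g i₀ * d i₀ + ∑ i ∈ S, g i * d i := by
      have hip := parseval A hA b ut
      rw [← hβ] at hip
      rw [← hip]
      exact (Finset.add_sum_erase _ _ (Finset.mem_univ i₀)).symm
    have h3 : (∑ i ∈ S, g i * d i) ^ 2 ≤ nb ^ 2 * W2 := by
      calc (∑ i ∈ S, g i * d i) ^ 2 ≤ (∑ i ∈ S, g i ^ 2) * ∑ i ∈ S, d i ^ 2 :=
            Finset.sum_mul_sq_le_sq_mul_sq S g d
        _ ≤ nb ^ 2 * W2 := mul_le_mul_of_nonneg_right hgS hW2nonneg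
    have h2 : |∑ i ∈ S, g i * d i| ≤ nb * W := by
      have h4 : |∑ i ∈ S, g i * d i| ^ 2 ≤ (nb * W) ^ 2 := by
        rw [sq_abs, mul_pow, hWsq]; exact h3
      have h5 := Real.sqrt_le_sqrt h4
      rwa [Real.sqrt_sq (abs_nonneg _), Real.sqrt_sq (mul_nonneg hnb0 hW0)] at h5
    calc |β| ≤ |g i₀ * d i₀| + |∑ i ∈ S, g i * d i| := by
          rw [h1]; exact abs_add_le _ _
      _ ≤ |γ| * 1 + nb * W := by
          rw [abs_mul, hgiabs]
          exact add_le_add (mul_le_mul_of_nonneg_left hdi₀abs (abs_nonneg γ)) h2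
      _ = |γ| + nb * W := by ring
  have hWbound : W ≤ 2 * |ρ| * nb * |γ| / Δ := by
    have h0 : 0 ≤ |ρ| * nb := mul_nonneg (abs_nonneg ρ) hnb0
    have h1 : |ρ| * |β| * nb ≤ |ρ| * nb * |γ| + (|ρ| * nb ^ 2) * W := by
      calc |ρ| * |β| * nb = (|ρ| * nb) * |β| := by ring
        _ ≤ (|ρ| * nb) * (|γ| + nb * W) := mul_le_mul_of_nonneg_left hβbound h0
        _ = |ρ| * nb * |γ| + (|ρ| * nb ^ 2) * W := by ring
    have h2 : (|ρ| * nb ^ 2) * W ≤ (Δ / 4) * W := mul_le_mul_of_nonneg_right hsmall hW0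
    rw [le_div_iff₀ hΔpos]
    ring_nf at hkey h1 h2 ⊢
    linarith [hkey, h1, h2]
  set χ : ℝ := c i₀ * d i₀ with hχ
  have hipu : ∑ i, u₁ i * ut i = χ := by
    have hip := parseval A hA u₁ ut
    rw [← hip]
    apply Finset.sum_eq_single i₀
    · intro j _ hj
      show c j * d j = 0
      rw [hczero j hj]; ring
    · intro h; exact absurd (Finset.mem_univ i₀) h
  have hχsq : χ ^ 2 = d i₀ ^ 2 := by rw [hχ, mul_pow, hci₀, one_mul]
  have hχle : |χ| ≤ 1 := by
    have h1 : χ ^ 2 ≤ 1 := by rw [hχsq]; exact hdi₀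
    calc |χ| = Real.sqrt (χ ^ 2) := (Real.sqrt_sq_eq_abs χ).symm
      _ ≤ Real.sqrt 1 := Real.sqrt_le_sqrt h1
      _ = 1 := Real.sqrt_one
  have hW2eq : W2 = 1 - χ ^ 2 := by
    rw [hχsq, ← hd2, hW2def, hS, Finset.sum_erase_eq_sub (Finset.mem_univ i₀)]
  refine ⟨if 0 ≤ χ then 1 else -1, by split <;> simp, ?_⟩
  set s : ℝ := if 0 ≤ χ then 1 else -1 with hs
  have hs2 : s ^ 2 = 1 := by rw [hs]; split <;> norm_num
  have hsχ : s * χ = |χ| := by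
    rw [hs]
    split
    · rename_i h; rw [abs_of_nonneg h, one_mul]
    · rename_i h; rw [abs_of_neg (lt_of_not_ge h)]; ring
  have hnorm2 : eucNorm (u₁ - s • ut) ^ 2 = 2 - 2 * |χ| := by
    rw [eucNorm_sq]
    have h0 : ∀ i, (u₁ - s • ut) i = u₁ i - s * ut i := fun i => rfl
    calc ∑ i, (u₁ - s • ut) i ^ 2
        = ∑ i, (u₁ i ^ 2 - 2 * s * (u₁ i * ut i) + s ^ 2 * ut i ^ 2) :=
          Finset.sum_congr rfl fun i _ => by rw [h0]; ring
      _ = ∑ i, u₁ i ^ 2 - 2 * s * ∑ i, u₁ i * ut i + s ^ 2 * ∑ i, ut i ^ 2 := by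
          rw [Finset.sum_add_distrib, Finset.sum_sub_distrib, Finset.mul_sum, Finset.mul_sum]
      _ = 2 - 2 * |χ| := by rw [hu₁2, hipu, hut2, hs2, ← hsχ]; ring
  have hEnn : 0 ≤ eucNorm (u₁ - s • ut) := Real.sqrt_nonneg _
  have hfinal2 : eucNorm (u₁ - s • ut) ^ 2 ≤ 2 * W2 := by
    rw [hnorm2, hW2eq]
    have hχ2 : χ ^ 2 ≤ |χ| := by
      calc χ ^ 2 = |χ| * |χ| := by rw [← sq_abs]; ring
        _ ≤ |χ| * 1 := mul_le_mul_of_nonneg_left hχle (abs_nonneg χ)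
        _ = |χ| := mul_one _
    linarith
  have hfinal : eucNorm (u₁ - s • ut) ≤ Real.sqrt 2 * W := by
    calc eucNorm (u₁ - s • ut) = Real.sqrt (eucNorm (u₁ - s • ut) ^ 2) :=
          (Real.sqrt_sq hEnn).symm
      _ ≤ Real.sqrt (2 * W2) := Real.sqrt_le_sqrt hfinal2
      _ = Real.sqrt 2 * W := by rw [Real.sqrt_mul (by norm_num : (0:ℝ) ≤ 2) W2]
  calc eucNorm (u₁ - s • ut) ≤ Real.sqrt 2 * W := hfinal
    _ ≤ Real.sqrt 2 * (2 * |ρ| * nb * |γ| / Δ) :=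
        mul_le_mul_of_nonneg_left hWbound (Real.sqrt_nonneg 2)
    _ = 2 * Real.sqrt 2 * (|ρ| * nb * |γ|) / Δ := by ring
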